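/- Under the assumptions of the split conformal guarantee (exchangeable scores S_1,...,S_{n+1} with almost surely distinct values), the coverage probability P(S_{n+1} ≤ q̂) equals exactly ⌈(1-α)(n+1)⌉/(n+1), and hence is at most 1 - α + 1/(n+1). -/

import Mathlib

open MeasureTheory Finset ENNReal

/-! Auxiliary lemmas for split conformal coverage. -/

theorem SCaux.countP_ofFn (p : ℝ → Bool) : ∀ (n : ℕ) (f : Fin n → ℝ),
    (List.ofFn f).countP p = (Finset.univ.filter (fun i => p (f i))).card := by
  intro n
  induction n with
  | zero => simp
  | succ m ih =>
    intro f
    rw [List.ofFn_succ, List.countP_cons, ih, Fin.card_filter_univ_succ' (fun i => p (f i))]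
    simp [add_comm]

theorem SCaux.sorted_getElem_mono (t : List ℝ) (ht : t.Pairwise (· ≤ ·)) (i j : ℕ) (h : i ≤ j)
    (hj : j < t.length) : t[i]'(by omega) ≤ t[j] := by
  rcases eq_or_lt_of_le h with rfl|h
  · rfl
  · exact List.pairwise_iff_getElem.mp ht i j (by omega) hj h

theorem SCaux.le_getD_iff_countP (t : List ℝ) (ht : t.Pairwise (· ≤ ·)) (x : ℝ) (m : ℕ)
    (hm : m < t.length) :
    x ≤ t.getD m 0 ↔ t.countP (fun y => decide (y < x)) ≤ m := by
  rw [List.getD_eq_getElem t 0 hm]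
  constructor
  · intro hx
    have hsplit : t = t.take m ++ t.drop m := (List.take_append_drop m t).symm
    have hdrop : (t.drop m).countP (fun y => decide (y < x)) = 0 := by
      rw [List.countP_eq_zero]
      intro y hy
      simp only [decide_eq_true_eq, not_lt]
      obtain ⟨i, hi, rfl⟩ := List.getElem_of_mem hy
      rw [List.getElem_drop]
      calc x ≤ t[m] := hx
        _ ≤ t[m + i]'(by simp at hi; omega) :=
            SCaux.sorted_getElem_mono t ht m (m+i) (by omega) (by simp at hi; omega)
    calc t.countP (fun y => decide (y < x))
        = (t.take m).countP _ + (t.drop m).countP _ := by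
          conv_lhs => rw [hsplit]
          rw [List.countP_append]
      _ ≤ m := by rw [hdrop]; simpa using List.countP_le_length.trans (by simp)
  · intro hc
    by_contra hx
    push_neg at hx
    have htake : (t.take (m+1)).countP (fun y => decide (y < x)) = m + 1 := by
      have h1 : (t.take (m+1)).countP (fun y => decide (y < x)) = (t.take (m+1)).length := by
        rw [List.countP_eq_length]
        intro y hy
        simp only [decide_eq_true_eq]
        obtain ⟨i, hi, rfl⟩ := List.getElem_of_mem hy
        rw [List.getElem_take]
        calc t[i]'(by simp at hi; omega) ≤ t[m] :=
              SCaux.sorted_getElem_mono t ht i m (by simp at hi; omega) hm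
          _ < x := hx
      rw [h1, List.length_take]
      omega
    have : (t.take (m+1)).countP (fun y => decide (y < x)) ≤ t.countP (fun y => decide (y < x)) :=
      (t.take_sublist (m+1)).countP_le
    omega

theorem SCaux.card_filter_comp_perm {ι : Type*} [Fintype ι] [DecidableEq ι] (σ : Equiv.Perm ι)
    (p : ι → Prop) [DecidablePred p] :
    (univ.filter fun i => p (σ i)).card = (univ.filter p).card := by
  apply Finset.card_bij (fun i _ => σ i)
  · intro a ha; simp only [mem_filter, mem_univ, true_and] at ha ⊢; exact ha
  · intro a _ b _ h; exact σ.injective h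
  · intro b hb
    exact ⟨σ.symm b, by simp only [mem_filter, mem_univ, true_and] at hb ⊢; simpa using hb,
      by simp⟩

theorem SCaux.crank_lt {ι : Type*} [Fintype ι] [DecidableEq ι] (v : ι → ℝ) {j j' : ι}
    (h : v j < v j') :
    (univ.filter fun i => v i < v j).card < (univ.filter fun i => v i < v j').card := by
  apply Finset.card_lt_card
  constructor
  · intro i hi; simp only [mem_filter, mem_univ, true_and] at hi ⊢; exact hi.trans h
  · intro hsub
    have := hsub (by simp [h] : j ∈ univ.filter fun i => v i < v j')
    simp at this

theorem SCaux.crank_le {n : ℕ} (v : Fin (n+1) → ℝ) (j : Fin (n+1)) :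
    (univ.filter fun i => v i < v j).card ≤ n := by
  have hs : (univ.filter fun i => v i < v j) ⊆ univ.erase j := by
    intro i hi
    simp only [mem_filter, mem_univ, true_and] at hi
    exact Finset.mem_erase.mpr ⟨fun h => by simp [h] at hi, mem_univ i⟩
  calc _ ≤ (univ.erase j).card := Finset.card_le_card hs
    _ = n := by rw [Finset.card_erase_of_mem (mem_univ j)]; simp

theorem SCaux.crank_inj {n : ℕ} (v : Fin (n+1) → ℝ) (hv : Function.Injective v) {a b : Fin (n+1)}
    (hab : (univ.filter fun i => v i < v a).card = (univ.filter fun i => v i < v b).card) :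
    a = b := by
  by_contra hne
  rcases lt_or_gt_of_ne (fun h => hne (hv h)) with h | h
  · exact absurd hab (Nat.ne_of_lt (SCaux.crank_lt v h))
  · exact absurd hab.symm (Nat.ne_of_lt (SCaux.crank_lt v h))

theorem SCaux.crank_surj {n : ℕ} (v : Fin (n+1) → ℝ) (hv : Function.Injective v) (r : ℕ)
    (hr : r ≤ n) : ∃ j, (univ.filter fun i => v i < v j).card = r := by
  set e : Fin (n+1) → Fin (n+1) := fun j => ⟨(univ.filter fun i => v i < v j).card,
    Nat.lt_succ_of_le (SCaux.crank_le v j)⟩ with he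
  have hinj : Function.Injective e := fun a b hab => SCaux.crank_inj v hv (congrArg Fin.val hab)
  obtain ⟨j, hj⟩ := (Finite.injective_iff_surjective.mp hinj) ⟨r, Nat.lt_succ_of_le hr⟩
  exact ⟨j, congrArg Fin.val hj⟩

theorem SCaux.measN {Ω : Type*} [MeasurableSpace Ω] {n : ℕ} (S : Fin (n+1) → Ω → ℝ)
    (hmeas : ∀ i, Measurable (S i)) (j : Fin (n+1)) :
    Measurable (fun ω => (univ.filter fun i => S i ω < S j ω).card) := by
  have h : (fun ω => (univ.filter fun i => S i ω < S j ω).card)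
      = fun ω => ∑ i : Fin (n+1), if S i ω < S j ω then 1 else 0 := by
    funext ω; rw [Finset.card_filter]
  rw [h]
  exact Finset.measurable_sum _ fun i _ =>
    Measurable.ite (measurableSet_lt (hmeas i) (hmeas j)) measurable_const measurable_const

theorem SCaux.measg {n : ℕ} (j : Fin (n+1)) :
    Measurable (fun v : Fin (n+1) → ℝ => (univ.filter fun i => v i < v j).card) := by
  have h : (fun v : Fin (n+1) → ℝ => (univ.filter fun i => v i < v j).card)
      = fun v => ∑ i : Fin (n+1), if v i < v j then 1 else 0 := by
    funext v; rw [Finset.card_filter]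
  rw [h]
  exact Finset.measurable_sum _ fun i _ =>
    Measurable.ite (measurableSet_lt (measurable_pi_apply i) (measurable_pi_apply j))
      measurable_const measurable_const

theorem SCaux.exchN {Ω : Type*} [MeasurableSpace Ω] {n : ℕ} (μ : Measure Ω)
    (S : Fin (n+1) → Ω → ℝ) (hmeas : ∀ i, Measurable (S i))
    (hexch : ∀ σ : Equiv.Perm (Fin (n + 1)),
      Measure.map (fun ω => fun i => S (σ i) ω) μ
        = Measure.map (fun ω => fun i => S i ω) μ)
    (j : Fin (n+1)) (r : ℕ) :
    μ {ω | (univ.filter fun i => S i ω < S j ω).card = r}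
      = μ {ω | (univ.filter fun i => S i ω < S (Fin.last n) ω).card = r} := by
  set σ : Equiv.Perm (Fin (n+1)) := Equiv.swap j (Fin.last n) with hσ
  have hf : Measurable (fun ω => fun i => S i ω) :=
    measurable_pi_lambda _ hmeas
  have hfσ : Measurable (fun ω => fun i => S (σ i) ω) :=
    measurable_pi_lambda _ (fun i => hmeas (σ i))
  set B : Set (Fin (n+1) → ℝ) := {v | (univ.filter fun i => v i < v (Fin.last n)).card = r}
    with hB
  have hBmeas : MeasurableSet B :=
    (SCaux.measg (Fin.last n)) (measurableSet_singleton r)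
  have h1 := congrArg (fun m => m B) (hexch σ)
  rw [Measure.map_apply hfσ hBmeas, Measure.map_apply hf hBmeas] at h1
  have h2 : (fun ω => fun i => S i ω) ⁻¹' B
      = {ω | (univ.filter fun i => S i ω < S (Fin.last n) ω).card = r} := rfl
  have h3 : (fun ω => fun i => S (σ i) ω) ⁻¹' B
      = {ω | (univ.filter fun i => S i ω < S j ω).card = r} := by
    ext ω
    simp only [Set.mem_preimage, hB, Set.mem_setOf_eq]
    have hlast : σ (Fin.last n) = j := Equiv.swap_apply_right j (Fin.last n)
    simp only [hlast]
    rw [SCaux.card_filter_comp_perm σ (fun i => S i ω < S j ω)]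
  rw [h2, h3] at h1
  exact h1

theorem SCaux.uniform_rank {Ω : Type*} [MeasurableSpace Ω] {n : ℕ} (μ : Measure Ω)
    [IsProbabilityMeasure μ] (S : Fin (n+1) → Ω → ℝ)
    (hmeas : ∀ i, Measurable (S i))
    (hexch : ∀ σ : Equiv.Perm (Fin (n + 1)),
      Measure.map (fun ω => fun i => S (σ i) ω) μ
        = Measure.map (fun ω => fun i => S i ω) μ)
    (hdist : ∀ᵐ ω ∂μ, Function.Injective fun i => S i ω)
    (r : ℕ) (hr : r ≤ n) :
    μ {ω | (univ.filter fun i => S i ω < S (Fin.last n) ω).card = r}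
      = (((n+1 : ℕ)) : ℝ≥0∞)⁻¹ := by
  have hne : μ {ω | ¬ Function.Injective fun i => S i ω} = 0 := by
    rw [← MeasureTheory.ae_iff]; exact hdist
  set D : Set Ω := (MeasureTheory.toMeasurable μ {ω | ¬ Function.Injective fun i => S i ω})ᶜ
    with hD
  have hDmeas : MeasurableSet D := (measurableSet_toMeasurable _ _).compl
  have hDc : μ Dᶜ = 0 := by
    rw [hD, compl_compl, measure_toMeasurable]; exact hne
  have hDinj : ∀ ω ∈ D, Function.Injective fun i => S i ω := by
    intro ω hω
    by_contra h
    exact hω (subset_toMeasurable μ _ h)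
  set E : Fin (n+1) → Set Ω := fun j => {ω | (univ.filter fun i => S i ω < S j ω).card = r}
    with hE
  have hEmeas : ∀ j, MeasurableSet (E j) := fun j =>
    (SCaux.measN S hmeas j) (measurableSet_singleton r)
  have hED : ∀ j, μ (E j ∩ D) = μ (E j) := fun j => measure_inter_conull hDc
  have hunion : (⋃ j, E j ∩ D) = D := by
    apply Set.Subset.antisymm
    · exact Set.iUnion_subset fun j => Set.inter_subset_right
    · intro ω hω
      obtain ⟨j, hj⟩ := SCaux.crank_surj (fun i => S i ω) (hDinj ω hω) r hr
      exact Set.mem_iUnion.mpr ⟨j, ⟨hj, hω⟩⟩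
  have hdisj : Pairwise (Function.onFun Disjoint fun j => E j ∩ D) := by
    intro a b hab
    rw [Function.onFun, Set.disjoint_left]
    rintro ω ⟨ha, hωD⟩ ⟨hb, _⟩
    exact hab (SCaux.crank_inj (fun i => S i ω) (hDinj ω hωD) (ha.trans hb.symm))
  have hsum : ∑ j : Fin (n+1), μ (E j ∩ D) = μ D := by
    have h := measure_iUnion (μ := μ) hdisj (fun j => (hEmeas j).inter hDmeas)
    rw [hunion, tsum_fintype] at h
    exact h.symm
  have hμD : μ D = 1 := by
    apply le_antisymm prob_le_one
    calc (1:ℝ≥0∞) = μ Set.univ := (measure_univ).symm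
      _ ≤ μ D + μ Dᶜ := by rw [← Set.union_compl_self D]; exact measure_union_le _ _
      _ = μ D := by rw [hDc, add_zero]
  have hEj : ∀ j, μ (E j) = μ (E (Fin.last n)) := fun j => SCaux.exchN μ S hmeas hexch j r
  have hkey : ((n+1 : ℕ) : ℝ≥0∞) * μ (E (Fin.last n)) = 1 := by
    calc ((n+1 : ℕ) : ℝ≥0∞) * μ (E (Fin.last n)) = ∑ _j : Fin (n+1), μ (E (Fin.last n)) := by
          rw [Finset.sum_const, Finset.card_univ, Fintype.card_fin, nsmul_eq_mul]
      _ = ∑ j : Fin (n+1), μ (E j ∩ D) := by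
          refine Finset.sum_congr rfl fun j _ => ?_
          rw [hED j, hEj j]
      _ = μ D := hsum
      _ = 1 := hμD
  have hne1 : ((n+1 : ℕ) : ℝ≥0∞) ≠ 0 := by simp
  have hne2 : ((n+1 : ℕ) : ℝ≥0∞) ≠ ⊤ := by simp
  show μ (E (Fin.last n)) = _
  rw [← one_mul (μ (E (Fin.last n))), ← ENNReal.inv_mul_cancel hne1 hne2, mul_assoc, hkey,
    mul_one]

theorem SCaux.card_filter_castSucc {n : ℕ} (p : Fin (n+1) → Prop) [DecidablePred p]
    (hp : ¬ p (Fin.last n)) :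
    (univ.filter p).card = (univ.filter fun i : Fin n => p i.castSucc).card := by
  rw [Finset.card_filter, Finset.card_filter, Fin.sum_univ_castSucc]
  simp [hp]

/-- Exact split-conformal coverage: under exchangeability and a.s. distinct
scores, if `k = ⌈(1-α)(n+1)⌉ ≤ n` and `q̂` is the `k`-th smallest of
`S_1, ..., S_n`, then `P(S_{n+1} ≤ q̂) = k / (n+1) ≤ 1 - α + 1/(n+1)`. -/
theorem split_conformal_exact_coverage
    {Ω : Type*} [MeasurableSpace Ω] (μ : Measure Ω) [IsProbabilityMeasure μ]
    (n : ℕ) (S : Fin (n + 1) → Ω → ℝ)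
    (hmeas : ∀ i, Measurable (S i))
    (hexch : ∀ σ : Equiv.Perm (Fin (n + 1)),
      Measure.map (fun ω => fun i => S (σ i) ω) μ
        = Measure.map (fun ω => fun i => S i ω) μ)
    (hdist : ∀ᵐ ω ∂μ, Function.Injective fun i => S i ω)
    (α : ℝ) (hα : α ∈ Set.Ioo (0 : ℝ) 1)
    (hk : ⌈(1 - α) * (n + 1)⌉₊ ≤ n) :
    (μ {ω | S (Fin.last n) ω ≤
        (((List.ofFn fun i : Fin n => S i.castSucc ω).insertionSort (· ≤ ·)).getD
          (⌈(1 - α) * (n + 1)⌉₊ - 1) 0)}).toReal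
      = (⌈(1 - α) * (n + 1)⌉₊ : ℝ) / (n + 1)
    ∧ (⌈(1 - α) * (n + 1)⌉₊ : ℝ) / (n + 1) ≤ 1 - α + 1 / (n + 1) := by
  obtain ⟨hα0, hα1⟩ := hα
  set k := ⌈(1 - α) * (n + 1)⌉₊ with hkdef
  have hpos : (0:ℝ) < (1 - α) * (n + 1) := by
    exact _root_.mul_pos (by linarith) (by positivity)
  have hk1 : 1 ≤ k := Nat.one_le_iff_ne_zero.mpr (Nat.pos_iff_ne_zero.mp (Nat.ceil_pos.mpr hpos))
  -- The event rewritten in terms of ranks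
  have hA : {ω | S (Fin.last n) ω ≤
        (((List.ofFn fun i : Fin n => S i.castSucc ω).insertionSort (· ≤ ·)).getD (k - 1) 0)}
      = ⋃ r ∈ Finset.range k,
          {ω | (univ.filter fun i => S i ω < S (Fin.last n) ω).card = r} := by
    ext ω
    simp only [Set.mem_setOf_eq, Set.mem_iUnion, Finset.mem_range, exists_prop]
    set x := S (Fin.last n) ω with hx
    set l := List.ofFn fun i : Fin n => S i.castSucc ω with hl
    have hts : (l.insertionSort (· ≤ ·)).Pairwise (· ≤ ·) := List.pairwise_insertionSort _ _
    have hlen : (l.insertionSort (· ≤ ·)).length = n := by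
      rw [(List.perm_insertionSort (· ≤ ·) l).length_eq, hl, List.length_ofFn]
    have h1 := SCaux.le_getD_iff_countP _ hts x (k-1) (by rw [hlen]; omega)
    rw [(List.perm_insertionSort (· ≤ ·) l).countP_eq, hl, SCaux.countP_ofFn] at h1
    have h2 : (univ.filter fun i : Fin n => (decide (S i.castSucc ω < x)) = true).card
        = (univ.filter fun i : Fin n => S i.castSucc ω < x).card := by
      congr 1
      apply Finset.filter_congr
      intro i _
      simp
    have h3 : (univ.filter fun i : Fin (n+1) => S i ω < x).card
        = (univ.filter fun i : Fin n => S i.castSucc ω < x).card :=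
      SCaux.card_filter_castSucc (fun i => S i ω < x) (by simp [hx])
    rw [h1]
    simp only [h2, ← h3]
    constructor
    · intro h
      exact ⟨_, by omega, rfl⟩
    · rintro ⟨r, hr, hrr⟩
      omega
  have hmeasE : ∀ r : ℕ,
      MeasurableSet {ω | (univ.filter fun i => S i ω < S (Fin.last n) ω).card = r} :=
    fun r => (SCaux.measN S hmeas (Fin.last n)) (measurableSet_singleton r)
  have hdisjE : Set.PairwiseDisjoint ↑(Finset.range k)
      (fun r => {ω | (univ.filter fun i => S i ω < S (Fin.last n) ω).card = r}) := by
    intro a _ b _ hab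
    rw [Function.onFun, Set.disjoint_left]
    rintro ω ha hb
    exact hab (ha.symm.trans hb)
  have hμA : μ {ω | S (Fin.last n) ω ≤
        (((List.ofFn fun i : Fin n => S i.castSucc ω).insertionSort (· ≤ ·)).getD (k - 1) 0)}
      = (k : ℝ≥0∞) * (((n+1 : ℕ)) : ℝ≥0∞)⁻¹ := by
    rw [hA, measure_biUnion_finset hdisjE (fun r _ => hmeasE r)]
    rw [Finset.sum_congr rfl (fun r hr => SCaux.uniform_rank μ S hmeas hexch hdist r
      (by rw [Finset.mem_range] at hr; omega))]
    rw [Finset.sum_const, Finset.card_range, nsmul_eq_mul]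
  constructor
  · rw [hμA, ENNReal.toReal_mul, ENNReal.toReal_inv]
    simp only [ENNReal.toReal_natCast]
    rw [div_eq_mul_inv]
    push_cast
    ring
  · have hceil : (k : ℝ) < (1 - α) * (n + 1) + 1 := Nat.ceil_lt_add_one (le_of_lt hpos)
    have hn : (0:ℝ) < (n : ℝ) + 1 := by positivity
    rw [div_le_iff₀ hn]
    have : (1 - α + 1 / (↑n + 1)) * (↑n + 1) = (1 - α) * (n + 1) + 1 := by
      field_simp
    rw [this]
    linarith
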